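/- arXiv:math/0012113 — 3 statements merged into one kernel-verified Lean document; each statement's English description precedes it below -/
import Mathlib

section
/- Let f : Ω₀ → ℂ be continuously differentiable with compact support in Ω₀, and let F(ξ,η) = f(ξ, η/φ(ξ)) on Ω. Then ∫_Ω |∇F(ξ,η)|² dξ dη = ∫_{Ω₀} (A(x,y) ∇f(x,y)) · ∇\overline{f}(x,y) · φ(x) dx dy, where A(x,y) = [[1, −φ'(x)y/φ(x)], [−φ'(x)y/φ(x), (1+(φ'(x)y)²)/φ(x)²]]. -/
open Set MeasureTheory ContinuousLinearMap

lemma det_aux (d e : ℝ) :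
    (((fst ℝ ℝ ℝ).prod (d • fst ℝ ℝ ℝ + e • snd ℝ ℝ ℝ)) : (ℝ×ℝ) →L[ℝ] (ℝ×ℝ)).det = e := by
  have h : (((fst ℝ ℝ ℝ).prod (d • fst ℝ ℝ ℝ + e • snd ℝ ℝ ℝ)) : (ℝ×ℝ) →L[ℝ] (ℝ×ℝ)).det
      = LinearMap.det (((fst ℝ ℝ ℝ).prod (d • fst ℝ ℝ ℝ + e • snd ℝ ℝ ℝ) : (ℝ×ℝ) →L[ℝ] (ℝ×ℝ)) : (ℝ×ℝ) →ₗ[ℝ] (ℝ×ℝ)) := rfl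
  rw [h, ← LinearMap.det_toMatrix (Module.Basis.finTwoProd ℝ), Matrix.det_fin_two]
  simp [LinearMap.toMatrix_apply, Module.Basis.finTwoProd_zero, Module.Basis.finTwoProd_one]

lemma hasFDerivAt_psi (φ : ℝ → ℝ) (hφ : Differentiable ℝ φ) (p : ℝ × ℝ) :
    HasFDerivAt (fun q : ℝ × ℝ => (q.1, q.2 * φ q.1))
      ((fst ℝ ℝ ℝ).prod ((p.2 * deriv φ p.1) • fst ℝ ℝ ℝ + φ p.1 • snd ℝ ℝ ℝ)) p := by
  apply HasFDerivAt.prodMk (hasFDerivAt_fst)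
  have h1 : HasFDerivAt (fun q : ℝ × ℝ => φ q.1) ((deriv φ p.1) • fst ℝ ℝ ℝ) p :=
    (hφ p.1).hasDerivAt.comp_hasFDerivAt p hasFDerivAt_fst
  have h2 := (hasFDerivAt_snd (𝕜 := ℝ) (E := ℝ) (F := ℝ) (p := p)).mul h1
  convert h2 using 1
  · rfl
  · rfl
  rw [smul_smul, add_comm]

lemma hasFDerivAt_G (φ : ℝ → ℝ) (hφ : Differentiable ℝ φ) (p : ℝ × ℝ) (h0 : φ p.1 ≠ 0) :
    HasFDerivAt (fun q : ℝ × ℝ => (q.1, q.2 / φ q.1))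
      ((fst ℝ ℝ ℝ).prod ((p.2 * (-(deriv φ p.1) / φ p.1 ^ 2)) • fst ℝ ℝ ℝ + (φ p.1)⁻¹ • snd ℝ ℝ ℝ)) p := by
  apply HasFDerivAt.prodMk (hasFDerivAt_fst)
  have h1 : HasFDerivAt (fun q : ℝ × ℝ => (φ q.1)⁻¹) ((-(deriv φ p.1) / φ p.1 ^ 2) • fst ℝ ℝ ℝ) p :=
    ((hφ p.1).hasDerivAt.inv h0).comp_hasFDerivAt p hasFDerivAt_fst
  have h2 := (hasFDerivAt_snd (𝕜 := ℝ) (E := ℝ) (F := ℝ) (p := p)).mul h1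
  simp only [div_eq_mul_inv]
  convert h2 using 1
  · rfl
  · rfl
  rw [smul_smul, div_eq_mul_inv, add_comm]

lemma sq_norm_complex (z : ℂ) : ((‖z‖ ^ 2 : ℝ) : ℂ) = (starRingEnd ℂ) z * z := by
  rw [← Complex.normSq_eq_conj_mul_self, ← Complex.sq_norm]

set_option linter.unusedVariables false in
/-- Change of variables in the Dirichlet form: for C¹ f compactly supported in Ω₀ and
F(ξ,η) = f(ξ, η/φ(ξ)), the Dirichlet integral of F over Ω equals
∫_{Ω₀} (A ∇f)·∇f̄ · φ(x) dx dy with A = [[1, −φ'y/φ], [−φ'y/φ, (1+(φ'y)²)/φ²]]. -/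
theorem stmt_3 (a b : ℝ) (hab : a < b) (φ : ℝ → ℝ) (hφ : ContDiff ℝ 1 φ)
    (hφpos : ∀ ξ ∈ Icc a b, 0 < φ ξ)
    (f : ℝ × ℝ → ℂ) (hf : ContDiff ℝ 1 f) (hcs : HasCompactSupport f)
    (hsupp : tsupport f ⊆ Ioo a b ×ˢ Ioo (0 : ℝ) 1)
    (F : ℝ × ℝ → ℂ) (hF : ∀ p : ℝ × ℝ, F p = f (p.1, p.2 / φ p.1)) :
    (∫ p in {q : ℝ × ℝ | a < q.1 ∧ q.1 < b ∧ 0 < q.2 ∧ q.2 < φ q.1},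
        ((‖fderiv ℝ F p (1, 0)‖ ^ 2 + ‖fderiv ℝ F p (0, 1)‖ ^ 2 : ℝ) : ℂ))
      = ∫ p in Ioo a b ×ˢ Ioo (0 : ℝ) 1,
          ((starRingEnd ℂ) (fderiv ℝ f p (1, 0)) * fderiv ℝ f p (1, 0)
            + ((-(deriv φ p.1 * p.2 / φ p.1) : ℝ) : ℂ) *
                ((starRingEnd ℂ) (fderiv ℝ f p (1, 0)) * fderiv ℝ f p (0, 1)
                  + (starRingEnd ℂ) (fderiv ℝ f p (0, 1)) * fderiv ℝ f p (1, 0))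
            + (((1 + (deriv φ p.1 * p.2) ^ 2) / φ p.1 ^ 2 : ℝ) : ℂ) *
                ((starRingEnd ℂ) (fderiv ℝ f p (0, 1)) * fderiv ℝ f p (0, 1)))
          * ((φ p.1 : ℝ) : ℂ) := by
  have hφd : Differentiable ℝ φ := hφ.differentiable one_ne_zero
  have hfd : Differentiable ℝ f := hf.differentiable one_ne_zero
  set s : Set (ℝ × ℝ) := Ioo a b ×ˢ Ioo (0 : ℝ) 1 with hs_def
  have hs : MeasurableSet s := measurableSet_Ioo.prod measurableSet_Ioo
  have hpos : ∀ p : ℝ × ℝ, p ∈ s → 0 < φ p.1 := by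
    rintro ⟨x, y⟩ hp
    rw [hs_def, mem_prod] at hp
    exact hφpos x ⟨hp.1.1.le, hp.1.2.le⟩
  have hder : ∀ p ∈ s, HasFDerivWithinAt (fun q : ℝ × ℝ => (q.1, q.2 * φ q.1))
      ((fst ℝ ℝ ℝ).prod ((p.2 * deriv φ p.1) • fst ℝ ℝ ℝ + φ p.1 • snd ℝ ℝ ℝ)) s p :=
    fun p _ => (hasFDerivAt_psi φ hφd p).hasFDerivWithinAt
  have hinj : InjOn (fun q : ℝ × ℝ => (q.1, q.2 * φ q.1)) s := by
    rintro ⟨x, y⟩ hp ⟨x', y'⟩ hq h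
    have h1 : x = x' := congrArg Prod.fst h
    subst h1
    have h2 : y * φ x = y' * φ x := congrArg Prod.snd h
    exact Prod.ext rfl (mul_right_cancel₀ (hpos _ hp).ne' h2)
  have himg : {q : ℝ × ℝ | a < q.1 ∧ q.1 < b ∧ 0 < q.2 ∧ q.2 < φ q.1}
      = (fun q : ℝ × ℝ => (q.1, q.2 * φ q.1)) '' s := by
    ext ⟨x, η⟩
    simp only [mem_setOf_eq, mem_image, Prod.mk.injEq, hs_def, mem_prod, mem_Ioo, Prod.exists]
    constructor
    · rintro ⟨h1, h2, h3, h4⟩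
      have hx : 0 < φ x := hφpos x ⟨h1.le, h2.le⟩
      exact ⟨x, η / φ x, ⟨⟨h1, h2⟩, div_pos h3 hx, (div_lt_one hx).2 h4⟩, rfl, by field_simp⟩
    · rintro ⟨x', y, ⟨⟨h1, h2⟩, h3, h4⟩, rfl, rfl⟩
      have hx : 0 < φ x' := hφpos x' ⟨h1.le, h2.le⟩
      exact ⟨h1, h2, mul_pos h3 hx, by nlinarith⟩
  rw [himg, integral_image_eq_integral_abs_det_fderiv_smul volume hs hder hinj]
  apply setIntegral_congr_fun hs
  rintro ⟨x, y⟩ hp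
  have hxab : x ∈ Ioo a b := by rw [hs_def, mem_prod] at hp; exact hp.1
  have hy01 : y ∈ Ioo (0:ℝ) 1 := by rw [hs_def, mem_prod] at hp; exact hp.2
  have hφx : 0 < φ x := hpos _ hp
  have hφx' : φ x ≠ 0 := hφx.ne'
  -- derivative of F at Ψ(x,y)
  have hFf : F = fun q : ℝ × ℝ => f (q.1, q.2 / φ q.1) := funext hF
  have hG := hasFDerivAt_G φ hφd (x, y * φ x) (by simpa using hφx')
  have hGval : ((x, y * φ x).1, (x, y * φ x).2 / φ (x, y * φ x).1) = (x, y) := by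
    simp [mul_div_assoc, div_self hφx']
  have hcomp : HasFDerivAt F ((fderiv ℝ f (x, y)).comp
      ((fst ℝ ℝ ℝ).prod (((x, y * φ x).2 * (-(deriv φ (x, y * φ x).1) / φ (x, y * φ x).1 ^ 2)) • fst ℝ ℝ ℝ
        + (φ (x, y * φ x).1)⁻¹ • snd ℝ ℝ ℝ))) (x, y * φ x) := by
    rw [hFf]
    have := ((hfd ((x, y * φ x).1, (x, y * φ x).2 / φ (x, y * φ x).1)).hasFDerivAt).comp (x, y * φ x) hG
    rwa [hGval] at this
  have hfdF := hcomp.fderiv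
  set A : ℂ := fderiv ℝ f (x, y) (1, 0) with hA
  set B : ℂ := fderiv ℝ f (x, y) (0, 1) with hB
  set c : ℝ := deriv φ x * y / φ x with hc
  have key : ∀ u v : ℝ, fderiv ℝ f (x, y) (u, v) = u • A + v • B := by
    intro u v
    have huv : ((u, v) : ℝ × ℝ) = u • ((1:ℝ), (0:ℝ)) + v • ((0:ℝ), (1:ℝ)) := by
      simp [Prod.ext_iff]
    rw [huv, _root_.map_add, _root_.map_smul, _root_.map_smul]
  have h10 : fderiv ℝ F (x, y * φ x) (1, 0) = A + (-c) • B := by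
    rw [hfdF]
    simp only [ContinuousLinearMap.comp_apply, ContinuousLinearMap.prod_apply,
      ContinuousLinearMap.add_apply, ContinuousLinearMap.smul_apply, coe_fst', coe_snd',
      smul_eq_mul, mul_one, mul_zero, add_zero]
    rw [key, one_smul]
    have he : y * φ x * (-deriv φ x / φ x ^ 2) = -c := by
      rw [hc]; field_simp
    rw [he]
  have h01 : fderiv ℝ F (x, y * φ x) (0, 1) = (φ x)⁻¹ • B := by
    rw [hfdF]
    simp only [ContinuousLinearMap.comp_apply, ContinuousLinearMap.prod_apply,
      ContinuousLinearMap.add_apply, ContinuousLinearMap.smul_apply, coe_fst', coe_snd',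
      smul_eq_mul, mul_one, mul_zero, zero_add]
    rw [key, zero_smul, zero_add]
  simp only [det_aux]
  rw [abs_of_pos hφx, h10, h01, Complex.ofReal_add, sq_norm_complex, sq_norm_complex]
  simp only [Complex.real_smul, Complex.ofReal_neg, Complex.ofReal_inv, map_add, map_mul,
    map_neg, Complex.conj_ofReal, map_inv₀]
  rw [hc]
  have hφC : (φ x : ℂ) ≠ 0 := Complex.ofReal_ne_zero.mpr hφx'
  push_cast
  field_simp
  ring
end

section
/- Let N be a positive integer, let h_1, …, h_N : [a,b] → ℂ be continuously differentiable, and let f(x,y) = Σ_{k=1}^N h_k(x) √2 sin(πky). Then ∫_{Ω₀} [ (A ∇f) · ∇\overline{f} − λ |f|² ] φ(x) dx dy = ∫_a^b [ Σ_{k=1}^N ( |h_k'(x)|² + ((πk/φ(x))² − λ) |h_k(x)|² ) + Σ_{k,r=1}^N ( (φ'(x)²/φ(x)²) π² k r β^{22}_{kr} \overline{h_k(x)} h_r(x) − (φ'(x)/φ(x)) π ( r β^{12}_{kr} \overline{h_k'(x)} h_r(x) + k β^{12}_{rk} \overline{h_k(x)} h_r'(x) ) ) ] φ(x) dx. -/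
open Set Real MeasureTheory

lemma intcos (c : ℝ) (hc : c ≠ 0) : ∫ y in (0:ℝ)..1, Real.cos (c*y) = Real.sin c / c := by
  have h := intervalIntegral.smul_integral_comp_mul_left (a := 0) (b := 1) Real.cos c
  rw [mul_zero, mul_one, integral_cos, Real.sin_zero, sub_zero] at h
  rw [smul_eq_mul] at h
  rw [eq_div_iff hc, mul_comm]
  exact h

lemma intcos_pi_int (m : ℤ) (hm : m ≠ 0) : ∫ y in (0:ℝ)..1, Real.cos (π * m * y) = 0 := by
  have hπ : (π : ℝ) * m ≠ 0 := by
    simp [Real.pi_ne_zero, hm]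
  rw [intcos _ hπ]
  rw [mul_comm π (m:ℝ), Real.sin_int_mul_pi]
  simp

lemma intcos_zero : ∫ y in (0:ℝ)..1, Real.cos (0 * y) = 1 := by simp

lemma orth_ss (k r : ℕ) (hk : 1 ≤ k) (hr : 1 ≤ r) :
    ∫ y in (0:ℝ)..1, (Real.sqrt 2 * Real.sin (π*k*y)) * (Real.sqrt 2 * Real.sin (π*r*y))
      = if k = r then 1 else 0 := by
  have h2 : Real.sqrt 2 * Real.sqrt 2 = 2 := Real.mul_self_sqrt (by norm_num)
  have key : ∀ y : ℝ, (Real.sqrt 2 * Real.sin (π*k*y)) * (Real.sqrt 2 * Real.sin (π*r*y))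
      = Real.cos ((π*((k:ℝ)-r))*y) - Real.cos ((π*((k:ℝ)+r))*y) := by
    intro y
    have e1 : (π*((k:ℝ)-r))*y = π*k*y - π*r*y := by ring
    have e2 : (π*((k:ℝ)+r))*y = π*k*y + π*r*y := by ring
    rw [e1, e2, Real.cos_sub, Real.cos_add]
    linear_combination (Real.sin (π*k*y) * Real.sin (π*r*y)) * h2
  rw [intervalIntegral.integral_congr (fun y _ => key y)]
  rw [intervalIntegral.integral_sub (by apply Continuous.intervalIntegrable; fun_prop)
    (by apply Continuous.intervalIntegrable; fun_prop)]
  have hsum : ∫ y in (0:ℝ)..1, Real.cos ((π*((k:ℝ)+r))*y) = 0 := by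
    have : ((k:ℝ) + r) = ((k + r : ℤ) : ℝ) := by push_cast; ring
    rw [this]
    exact intcos_pi_int _ (by omega)
  rw [hsum, sub_zero]
  by_cases hkr : k = r
  · subst hkr
    simp
  · have : ((k:ℝ) - r) = (((k:ℤ) - r : ℤ) : ℝ) := by push_cast; ring
    rw [this, intcos_pi_int _ (by omega), if_neg hkr]

lemma orth_cc (k r : ℕ) (hk : 1 ≤ k) (hr : 1 ≤ r) :
    ∫ y in (0:ℝ)..1, (Real.sqrt 2 * Real.cos (π*k*y)) * (Real.sqrt 2 * Real.cos (π*r*y))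
      = if k = r then 1 else 0 := by
  have h2 : Real.sqrt 2 * Real.sqrt 2 = 2 := Real.mul_self_sqrt (by norm_num)
  have key : ∀ y : ℝ, (Real.sqrt 2 * Real.cos (π*k*y)) * (Real.sqrt 2 * Real.cos (π*r*y))
      = Real.cos ((π*((k:ℝ)-r))*y) + Real.cos ((π*((k:ℝ)+r))*y) := by
    intro y
    have e1 : (π*((k:ℝ)-r))*y = π*k*y - π*r*y := by ring
    have e2 : (π*((k:ℝ)+r))*y = π*k*y + π*r*y := by ring
    rw [e1, e2, Real.cos_sub, Real.cos_add]
    linear_combination (Real.cos (π*k*y) * Real.cos (π*r*y)) * h2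
  rw [intervalIntegral.integral_congr (fun y _ => key y)]
  rw [intervalIntegral.integral_add (by apply Continuous.intervalIntegrable; fun_prop)
    (by apply Continuous.intervalIntegrable; fun_prop)]
  have hsum : ∫ y in (0:ℝ)..1, Real.cos ((π*((k:ℝ)+r))*y) = 0 := by
    have : ((k:ℝ) + r) = ((k + r : ℤ) : ℝ) := by push_cast; ring
    rw [this]
    exact intcos_pi_int _ (by omega)
  rw [hsum, add_zero]
  by_cases hkr : k = r
  · subst hkr
    simp
  · have : ((k:ℝ) - r) = (((k:ℤ) - r : ℤ) : ℝ) := by push_cast; ring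
    rw [this, intcos_pi_int _ (by omega), if_neg hkr]

lemma ioo_int {E : Type*} [NormedAddCommGroup E] [NormedSpace ℝ E] (g : ℝ → E) :
    ∫ y in Ioo (0:ℝ) 1, g y = ∫ y in (0:ℝ)..1, g y := by
  rw [intervalIntegral.integral_of_le (by norm_num), integral_Ioc_eq_integral_Ioo]

lemma cont_ion {E : Type*} [NormedAddCommGroup E] {g : ℝ → E} (hg : Continuous g) :
    IntegrableOn g (Ioo (0:ℝ) 1) :=
  (hg.continuousOn.integrableOn_compact isCompact_Icc).mono_set Ioo_subset_Icc_self

lemma key_bilin (N : ℕ) (u v : ℕ → ℂ) (aa bb : ℕ → ℝ → ℝ) (w : ℝ → ℝ)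
    (ha : ∀ k, Continuous (aa k)) (hb : ∀ k, Continuous (bb k)) (hw : Continuous w) :
    ∫ y in Ioo (0:ℝ) 1, (Complex.ofReal (w y)) *
        ((starRingEnd ℂ) (∑ k ∈ Finset.Icc 1 N, (Complex.ofReal (aa k y)) * u k) *
          (∑ r ∈ Finset.Icc 1 N, (Complex.ofReal (bb r y)) * v r))
      = ∑ k ∈ Finset.Icc 1 N, ∑ r ∈ Finset.Icc 1 N,
          (starRingEnd ℂ) (u k) * v r * Complex.ofReal (∫ y in (0:ℝ)..1, w y * (aa k y * bb r y)) := by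
  have hpt : ∀ y : ℝ, (Complex.ofReal (w y)) *
        ((starRingEnd ℂ) (∑ k ∈ Finset.Icc 1 N, (Complex.ofReal (aa k y)) * u k) *
          (∑ r ∈ Finset.Icc 1 N, (Complex.ofReal (bb r y)) * v r))
      = ∑ k ∈ Finset.Icc 1 N, ∑ r ∈ Finset.Icc 1 N,
          (starRingEnd ℂ) (u k) * v r * Complex.ofReal (w y * (aa k y * bb r y)) := by
    intro y
    rw [map_sum, Finset.sum_mul_sum, Finset.mul_sum]
    refine Finset.sum_congr rfl fun k _ => ?_
    rw [Finset.mul_sum]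
    refine Finset.sum_congr rfl fun r _ => ?_
    simp only [map_mul, Complex.conj_ofReal]
    push_cast
    ring
  have hc : ∀ k r : ℕ, Continuous (fun y : ℝ =>
      (starRingEnd ℂ) (u k) * v r * Complex.ofReal (w y * (aa k y * bb r y))) := by
    intro k r
    apply Continuous.mul continuous_const
    exact Complex.continuous_ofReal.comp (hw.mul ((ha k).mul (hb r)))
  rw [MeasureTheory.setIntegral_congr_fun measurableSet_Ioo (fun y _ => hpt y)]
  rw [MeasureTheory.integral_finset_sum]
  · refine Finset.sum_congr rfl fun k _ => ?_
    rw [MeasureTheory.integral_finset_sum]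
    · refine Finset.sum_congr rfl fun r _ => ?_
      rw [MeasureTheory.integral_const_mul]
      congr 1
      rw [ioo_int (fun y => (Complex.ofReal (w y * (aa k y * bb r y)) : ℂ))]
      exact intervalIntegral.integral_ofReal
    · exact fun r _ => cont_ion (hc k r)
  · exact fun k _ => cont_ion (continuous_finset_sum _ (fun r _ => hc k r))

set_option maxHeartbeats 2000000 in
lemma inner_key (N : ℕ) (c d : ℕ → ℂ) (P Q lam : ℝ) (hP : P ≠ 0) :
    ∫ y in Ioo (0:ℝ) 1,
      ((starRingEnd ℂ) (∑ k ∈ Finset.Icc 1 N, Complex.ofReal (Real.sqrt 2 * Real.sin (π*k*y)) * d k)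
          * (∑ k ∈ Finset.Icc 1 N, Complex.ofReal (Real.sqrt 2 * Real.sin (π*k*y)) * d k)
        + Complex.ofReal (-(Q * y / P)) *
            ((starRingEnd ℂ) (∑ k ∈ Finset.Icc 1 N, Complex.ofReal (Real.sqrt 2 * Real.sin (π*k*y)) * d k)
                * (∑ k ∈ Finset.Icc 1 N, c k * Complex.ofReal (Real.sqrt 2 * (π*k*Real.cos (π*k*y))))
              + (starRingEnd ℂ) (∑ k ∈ Finset.Icc 1 N, c k * Complex.ofReal (Real.sqrt 2 * (π*k*Real.cos (π*k*y))))
                * (∑ k ∈ Finset.Icc 1 N, Complex.ofReal (Real.sqrt 2 * Real.sin (π*k*y)) * d k))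
        + Complex.ofReal ((1 + (Q*y)^2) / P^2) *
            ((starRingEnd ℂ) (∑ k ∈ Finset.Icc 1 N, c k * Complex.ofReal (Real.sqrt 2 * (π*k*Real.cos (π*k*y))))
              * (∑ k ∈ Finset.Icc 1 N, c k * Complex.ofReal (Real.sqrt 2 * (π*k*Real.cos (π*k*y)))))
        - Complex.ofReal lam *
            Complex.ofReal (‖∑ k ∈ Finset.Icc 1 N, c k * Complex.ofReal (Real.sqrt 2 * Real.sin (π*k*y))‖^2))
      * Complex.ofReal P
    = ((∑ k ∈ Finset.Icc 1 N,
          Complex.ofReal (‖d k‖ ^ 2 + ((π * k / P) ^ 2 - lam) * ‖c k‖ ^ 2))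
        + ∑ k ∈ Finset.Icc 1 N, ∑ r ∈ Finset.Icc 1 N,
            (Complex.ofReal ((Q ^ 2 / P ^ 2) * π ^ 2 * k * r *
                (∫ y in (0:ℝ)..1, 2 * y ^ 2 * Real.cos (π * k * y) * Real.cos (π * r * y)))
              * (starRingEnd ℂ) (c k) * c r
            - Complex.ofReal (Q / P * π) *
                ((r : ℂ) * Complex.ofReal (∫ y in (0:ℝ)..1, 2 * y * Real.sin (π * k * y) * Real.cos (π * r * y))
                    * (starRingEnd ℂ) (d k) * c r
                  + (k : ℂ) * Complex.ofReal (∫ y in (0:ℝ)..1, 2 * y * Real.sin (π * r * y) * Real.cos (π * k * y))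
                    * (starRingEnd ℂ) (c k) * d r)))
      * Complex.ofReal P := by
  have hPc : (P : ℂ) ≠ 0 := Complex.ofReal_ne_zero.mpr hP
  have h2 : Real.sqrt 2 * Real.sqrt 2 = 2 := Real.mul_self_sqrt (by norm_num)
  set S : ℕ → ℝ → ℝ := fun k y => Real.sqrt 2 * Real.sin (π*k*y) with hS
  set Cf : ℕ → ℝ → ℝ := fun k y => Real.sqrt 2 * (π*k*Real.cos (π*k*y)) with hCf
  have hScont : ∀ k, Continuous (S k) := fun k => by simp only [hS]; fun_prop
  have hCfcont : ∀ k, Continuous (Cf k) := fun k => by simp only [hCf]; fun_prop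
  -- the five kernel weights
  set w1 : ℝ → ℝ := fun _ => P with hw1
  set w2 : ℝ → ℝ := fun y => -Q * y with hw2
  set w4 : ℝ → ℝ := fun y => (1 + (Q*y)^2) / P with hw4
  set w5 : ℝ → ℝ := fun _ => -(lam * P) with hw5
  -- pointwise decomposition into five bilinear pieces
  have hsplit : ∀ y : ℝ,
      ((starRingEnd ℂ) (∑ k ∈ Finset.Icc 1 N, Complex.ofReal (S k y) * d k)
          * (∑ k ∈ Finset.Icc 1 N, Complex.ofReal (S k y) * d k)
        + Complex.ofReal (-(Q * y / P)) *
            ((starRingEnd ℂ) (∑ k ∈ Finset.Icc 1 N, Complex.ofReal (S k y) * d k)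
                * (∑ k ∈ Finset.Icc 1 N, c k * Complex.ofReal (Cf k y))
              + (starRingEnd ℂ) (∑ k ∈ Finset.Icc 1 N, c k * Complex.ofReal (Cf k y))
                * (∑ k ∈ Finset.Icc 1 N, Complex.ofReal (S k y) * d k))
        + Complex.ofReal ((1 + (Q*y)^2) / P^2) *
            ((starRingEnd ℂ) (∑ k ∈ Finset.Icc 1 N, c k * Complex.ofReal (Cf k y))
              * (∑ k ∈ Finset.Icc 1 N, c k * Complex.ofReal (Cf k y)))
        - Complex.ofReal lam *
            Complex.ofReal (‖∑ k ∈ Finset.Icc 1 N, c k * Complex.ofReal (S k y)‖^2))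
      * Complex.ofReal P
      = Complex.ofReal (w1 y) * ((starRingEnd ℂ) (∑ k ∈ Finset.Icc 1 N, Complex.ofReal (S k y) * d k)
            * (∑ k ∈ Finset.Icc 1 N, Complex.ofReal (S k y) * d k))
        + Complex.ofReal (w2 y) * ((starRingEnd ℂ) (∑ k ∈ Finset.Icc 1 N, Complex.ofReal (S k y) * d k)
            * (∑ k ∈ Finset.Icc 1 N, Complex.ofReal (Cf k y) * c k))
        + Complex.ofReal (w2 y) * ((starRingEnd ℂ) (∑ k ∈ Finset.Icc 1 N, Complex.ofReal (Cf k y) * c k)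
            * (∑ k ∈ Finset.Icc 1 N, Complex.ofReal (S k y) * d k))
        + Complex.ofReal (w4 y) * ((starRingEnd ℂ) (∑ k ∈ Finset.Icc 1 N, Complex.ofReal (Cf k y) * c k)
            * (∑ k ∈ Finset.Icc 1 N, Complex.ofReal (Cf k y) * c k))
        + Complex.ofReal (w5 y) * ((starRingEnd ℂ) (∑ k ∈ Finset.Icc 1 N, Complex.ofReal (S k y) * c k)
            * (∑ k ∈ Finset.Icc 1 N, Complex.ofReal (S k y) * c k)) := by
    intro y
    have e2 : (∑ k ∈ Finset.Icc 1 N, c k * Complex.ofReal (Cf k y))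
        = ∑ k ∈ Finset.Icc 1 N, Complex.ofReal (Cf k y) * c k :=
      Finset.sum_congr rfl fun k _ => mul_comm _ _
    have e3 : (∑ k ∈ Finset.Icc 1 N, c k * Complex.ofReal (S k y))
        = ∑ k ∈ Finset.Icc 1 N, Complex.ofReal (S k y) * c k :=
      Finset.sum_congr rfl fun k _ => mul_comm _ _
    have e4 : Complex.ofReal (‖∑ k ∈ Finset.Icc 1 N, Complex.ofReal (S k y) * c k‖^2)
        = (starRingEnd ℂ) (∑ k ∈ Finset.Icc 1 N, Complex.ofReal (S k y) * c k)
          * (∑ k ∈ Finset.Icc 1 N, Complex.ofReal (S k y) * c k) := by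
      rw [Complex.conj_mul']
      push_cast
      ring
    rw [e2, e3, e4, hw1, hw2, hw4, hw5]
    push_cast
    field_simp
    ring
  rw [MeasureTheory.setIntegral_congr_fun measurableSet_Ioo (fun y _ => hsplit y)]
  -- integrability of the five pieces
  have cont5 : ∀ (w : ℝ → ℝ), Continuous w → ∀ (u v : ℕ → ℂ) (aa bb : ℕ → ℝ → ℝ),
      (∀ k, Continuous (aa k)) → (∀ k, Continuous (bb k)) →
      Continuous (fun y : ℝ => Complex.ofReal (w y) *
        ((starRingEnd ℂ) (∑ k ∈ Finset.Icc 1 N, Complex.ofReal (aa k y) * u k)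
          * (∑ r ∈ Finset.Icc 1 N, Complex.ofReal (bb r y) * v r))) := by
    intro w hw u v aa bb ha hb
    apply (Complex.continuous_ofReal.comp hw).mul
    apply Continuous.mul
    · exact Complex.continuous_conj.comp (continuous_finset_sum _ fun k _ =>
        (Complex.continuous_ofReal.comp (ha k)).mul continuous_const)
    · exact continuous_finset_sum _ fun k _ =>
        (Complex.continuous_ofReal.comp (hb k)).mul continuous_const
  have c1 := cont5 w1 (by fun_prop) d d S S hScont hScont
  have c2 := cont5 w2 (by fun_prop) d c S Cf hScont hCfcont
  have c3 := cont5 w2 (by fun_prop) c d Cf S hCfcont hScont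
  have c4 := cont5 w4 (by fun_prop) c c Cf Cf hCfcont hCfcont
  have c5 := cont5 w5 (by fun_prop) c c S S hScont hScont
  rw [MeasureTheory.integral_add (cont_ion (((c1.fun_add c2).fun_add c3).fun_add c4)) (cont_ion c5)]
  rw [MeasureTheory.integral_add (cont_ion ((c1.fun_add c2).fun_add c3)) (cont_ion c4)]
  rw [MeasureTheory.integral_add (cont_ion (c1.fun_add c2)) (cont_ion c3)]
  rw [MeasureTheory.integral_add (cont_ion c1) (cont_ion c2)]
  rw [key_bilin N d d S S w1 hScont hScont (by fun_prop),
      key_bilin N d c S Cf w2 hScont hCfcont (by fun_prop),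
      key_bilin N c d Cf S w2 hCfcont hScont (by fun_prop),
      key_bilin N c c Cf Cf w4 hCfcont hCfcont (by fun_prop),
      key_bilin N c c S S w5 hScont hScont (by fun_prop)]
  -- values of the real integrals
  have W1 : ∀ k r : ℕ, 1 ≤ k → 1 ≤ r →
      ∫ y in (0:ℝ)..1, w1 y * (S k y * S r y) = if k = r then P else 0 := by
    intro k r hk hr
    have hpt : ∀ y ∈ uIcc (0:ℝ) 1, w1 y * (S k y * S r y)
        = P * ((Real.sqrt 2 * Real.sin (π*k*y)) * (Real.sqrt 2 * Real.sin (π*r*y))) := by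
      intro y _; simp only [hw1, hS]
    rw [intervalIntegral.integral_congr hpt, intervalIntegral.integral_const_mul,
      orth_ss k r hk hr, mul_ite, mul_one, mul_zero]
  have W5 : ∀ k r : ℕ, 1 ≤ k → 1 ≤ r →
      ∫ y in (0:ℝ)..1, w5 y * (S k y * S r y) = if k = r then -(lam*P) else 0 := by
    intro k r hk hr
    have hpt : ∀ y ∈ uIcc (0:ℝ) 1, w5 y * (S k y * S r y)
        = (-(lam*P)) * ((Real.sqrt 2 * Real.sin (π*k*y)) * (Real.sqrt 2 * Real.sin (π*r*y))) := by
      intro y _; simp only [hw5, hS]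
    rw [intervalIntegral.integral_congr hpt, intervalIntegral.integral_const_mul,
      orth_ss k r hk hr, mul_ite, mul_one, mul_zero]
  have W2 : ∀ k r : ℕ,
      ∫ y in (0:ℝ)..1, w2 y * (S k y * Cf r y)
        = -(Q*π*r) * ∫ y in (0:ℝ)..1, 2 * y * Real.sin (π*k*y) * Real.cos (π*r*y) := by
    intro k r
    have hpt : ∀ y ∈ uIcc (0:ℝ) 1, w2 y * (S k y * Cf r y)
        = (-(Q*π*r)) * (2 * y * Real.sin (π*k*y) * Real.cos (π*r*y)) := by
      intro y _; simp only [hw2, hS, hCf]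
      linear_combination (-(Q*y*(π*(r:ℝ))*Real.sin (π*k*y)*Real.cos (π*r*y))) * h2
    rw [intervalIntegral.integral_congr hpt, intervalIntegral.integral_const_mul]
  have W3 : ∀ k r : ℕ,
      ∫ y in (0:ℝ)..1, w2 y * (Cf k y * S r y)
        = -(Q*π*k) * ∫ y in (0:ℝ)..1, 2 * y * Real.sin (π*r*y) * Real.cos (π*k*y) := by
    intro k r
    have hpt : ∀ y ∈ uIcc (0:ℝ) 1, w2 y * (Cf k y * S r y)
        = (-(Q*π*k)) * (2 * y * Real.sin (π*r*y) * Real.cos (π*k*y)) := by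
      intro y _; simp only [hw2, hS, hCf]
      linear_combination (-(Q*y*(π*(k:ℝ))*Real.sin (π*r*y)*Real.cos (π*k*y))) * h2
    rw [intervalIntegral.integral_congr hpt, intervalIntegral.integral_const_mul]
  have W4 : ∀ k r : ℕ, 1 ≤ k → 1 ≤ r →
      ∫ y in (0:ℝ)..1, w4 y * (Cf k y * Cf r y)
        = (if k = r then π^2*k*r/P else 0)
          + (Q^2*π^2*k*r/P) * ∫ y in (0:ℝ)..1, 2 * y^2 * Real.cos (π*k*y) * Real.cos (π*r*y) := by
    intro k r hk hr
    have hpt : ∀ y ∈ uIcc (0:ℝ) 1, w4 y * (Cf k y * Cf r y)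
        = (π^2*k*r/P) * ((Real.sqrt 2 * Real.cos (π*k*y)) * (Real.sqrt 2 * Real.cos (π*r*y)))
          + (Q^2*π^2*k*r/P) * (2 * y^2 * Real.cos (π*k*y) * Real.cos (π*r*y)) := by
      intro y _; simp only [hw4, hS, hCf]
      have key : ∀ A B : ℝ, (Real.sqrt 2 * A) * (Real.sqrt 2 * B) = 2 * (A * B) := by
        intro A B
        calc (Real.sqrt 2 * A) * (Real.sqrt 2 * B) = (Real.sqrt 2 * Real.sqrt 2) * (A * B) := by ring
        _ = 2 * (A * B) := by rw [h2]
      rw [key, key]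
      field_simp
    rw [intervalIntegral.integral_congr hpt,
      intervalIntegral.integral_add
        (by apply Continuous.intervalIntegrable; fun_prop)
        (by apply Continuous.intervalIntegrable; fun_prop),
      intervalIntegral.integral_const_mul, intervalIntegral.integral_const_mul,
      orth_cc k r hk hr, mul_ite, mul_one, mul_zero]
  -- assemble
  simp only [← Finset.sum_add_distrib]
  rw [Finset.sum_mul]
  refine Finset.sum_congr rfl fun k hk => ?_
  rw [add_mul, Finset.sum_mul]
  have hdiag : Complex.ofReal (‖d k‖ ^ 2 + ((π * k / P) ^ 2 - lam) * ‖c k‖ ^ 2) * Complex.ofReal P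
      = ∑ r ∈ Finset.Icc 1 N, (if r = k then
          Complex.ofReal (‖d k‖ ^ 2 + ((π * k / P) ^ 2 - lam) * ‖c k‖ ^ 2) * Complex.ofReal P else 0) := by
    rw [Finset.sum_ite_eq' (Finset.Icc 1 N) k, if_pos hk]
  rw [hdiag, ← Finset.sum_add_distrib]
  refine Finset.sum_congr rfl fun r hr => ?_
  have hk1 : 1 ≤ k := (Finset.mem_Icc.mp hk).1
  have hr1 : 1 ≤ r := (Finset.mem_Icc.mp hr).1
  rw [W1 k r hk1 hr1, W2 k r, W3 k r, W4 k r hk1 hr1, W5 k r hk1 hr1]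
  by_cases hkr : k = r
  · subst hkr
    simp only [if_pos rfl]
    generalize (∫ y in (0:ℝ)..1, 2 * y * Real.sin (π * k * y) * Real.cos (π * k * y)) = I1
    generalize (∫ y in (0:ℝ)..1, 2 * y ^ 2 * Real.cos (π * k * y) * Real.cos (π * k * y)) = I3
    push_cast
    rw [← Complex.conj_mul' (d k), ← Complex.conj_mul' (c k)]
    field_simp
    ring
  · rw [if_neg hkr, if_neg hkr, if_neg hkr, if_neg (fun hh => hkr (hh.symm))]
    generalize (∫ y in (0:ℝ)..1, 2 * y * Real.sin (π * k * y) * Real.cos (π * r * y)) = I1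
    generalize (∫ y in (0:ℝ)..1, 2 * y * Real.sin (π * r * y) * Real.cos (π * k * y)) = I2
    generalize (∫ y in (0:ℝ)..1, 2 * y ^ 2 * Real.cos (π * k * y) * Real.cos (π * r * y)) = I3
    push_cast
    field_simp
    ring

set_option maxHeartbeats 2000000 in
/-- Discretisation of the quadratic form: for f(x,y) = Σ_{k=1}^N h_k(x) √2 sin(πky),
∫_{Ω₀} [(A∇f)·∇f̄ − λ|f|²] φ dx dy equals the one-dimensional integral
∫_a^b [ Σ_k (|h_k'|² + ((πk/φ)² − λ)|h_k|²)
  + Σ_{k,r} ((φ'²/φ²) π²kr β²²_{kr} h̄_k h_r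
      − (φ'/φ) π (r β¹²_{kr} h̄_k' h_r + k β¹²_{rk} h̄_k h_r')) ] φ dx. -/
theorem stmt_8 (a b : ℝ) (hab : a < b) (φ : ℝ → ℝ)
    (hφ : ContDiffOn ℝ 1 φ (Icc a b)) (hφpos : ∀ x ∈ Icc a b, 0 < φ x)
    (lam : ℝ) (N : ℕ) (hN : 1 ≤ N) (h : ℕ → ℝ → ℂ)
    (hh : ∀ k ∈ Finset.Icc 1 N, ContDiffOn ℝ 1 (h k) (Icc a b))
    (f : ℝ × ℝ → ℂ)
    (hf : ∀ p : ℝ × ℝ, f p = ∑ k ∈ Finset.Icc 1 N,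
      h k p.1 * Complex.ofReal (Real.sqrt 2 * Real.sin (π * k * p.2))) :
    (∫ p in Ioo a b ×ˢ Ioo (0 : ℝ) 1,
        ((starRingEnd ℂ) (fderiv ℝ f p (1, 0)) * fderiv ℝ f p (1, 0)
          + Complex.ofReal (-(deriv φ p.1 * p.2 / φ p.1)) *
              ((starRingEnd ℂ) (fderiv ℝ f p (1, 0)) * fderiv ℝ f p (0, 1)
                + (starRingEnd ℂ) (fderiv ℝ f p (0, 1)) * fderiv ℝ f p (1, 0))
          + Complex.ofReal ((1 + (deriv φ p.1 * p.2) ^ 2) / φ p.1 ^ 2) *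
              ((starRingEnd ℂ) (fderiv ℝ f p (0, 1)) * fderiv ℝ f p (0, 1))
          - Complex.ofReal lam * Complex.ofReal (‖f p‖ ^ 2))
        * Complex.ofReal (φ p.1))
      = ∫ x in Ioo a b,
          ((∑ k ∈ Finset.Icc 1 N,
              Complex.ofReal
                (‖deriv (h k) x‖ ^ 2 + ((π * k / φ x) ^ 2 - lam) * ‖h k x‖ ^ 2))
            + ∑ k ∈ Finset.Icc 1 N, ∑ r ∈ Finset.Icc 1 N,
                (Complex.ofReal ((deriv φ x ^ 2 / φ x ^ 2) * π ^ 2 * k * r *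
                    (∫ y in (0:ℝ)..1, 2 * y ^ 2 * Real.cos (π * k * y) * Real.cos (π * r * y)))
                  * (starRingEnd ℂ) (h k x) * h r x
                - Complex.ofReal (deriv φ x / φ x * π) *
                    ((r : ℂ) *
                        Complex.ofReal (∫ y in (0:ℝ)..1,
                            2 * y * Real.sin (π * k * y) * Real.cos (π * r * y))
                        * (starRingEnd ℂ) (deriv (h k) x) * h r x
                      + (k : ℂ) *
                        Complex.ofReal (∫ y in (0:ℝ)..1,
                            2 * y * Real.sin (π * r * y) * Real.cos (π * k * y))
                        * (starRingEnd ℂ) (h k x) * deriv (h r) x)))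
          * Complex.ofReal (φ x) := by
  have hfe : f = fun p : ℝ × ℝ => ∑ k ∈ Finset.Icc 1 N,
      h k p.1 * Complex.ofReal (Real.sqrt 2 * Real.sin (π * k * p.2)) := funext hf
  subst hfe
  have hmemI : ∀ x ∈ Ioo a b, Icc a b ∈ nhds x := fun x hx => Icc_mem_nhds hx.1 hx.2
  have hdiff : ∀ k ∈ Finset.Icc 1 N, ∀ x ∈ Ioo a b, HasDerivAt (h k) (deriv (h k) x) x := by
    intro k hk x hx
    exact (((hh k hk).differentiableOn one_ne_zero x (Ioo_subset_Icc_self hx)).differentiableAt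
      (hmemI x hx)).hasDerivAt
  -- the continuous substitute Φ
  set Φ : ℝ × ℝ → ℂ := fun p =>
    ((starRingEnd ℂ) (∑ k ∈ Finset.Icc 1 N,
          Complex.ofReal (Real.sqrt 2 * Real.sin (π*k*p.2)) * derivWithin (h k) (Icc a b) p.1)
        * (∑ k ∈ Finset.Icc 1 N,
          Complex.ofReal (Real.sqrt 2 * Real.sin (π*k*p.2)) * derivWithin (h k) (Icc a b) p.1)
      + Complex.ofReal (-(derivWithin φ (Icc a b) p.1 * p.2 / φ p.1)) *
          ((starRingEnd ℂ) (∑ k ∈ Finset.Icc 1 N,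
              Complex.ofReal (Real.sqrt 2 * Real.sin (π*k*p.2)) * derivWithin (h k) (Icc a b) p.1)
              * (∑ k ∈ Finset.Icc 1 N, h k p.1 * Complex.ofReal (Real.sqrt 2 * (π*k*Real.cos (π*k*p.2))))
            + (starRingEnd ℂ) (∑ k ∈ Finset.Icc 1 N, h k p.1 * Complex.ofReal (Real.sqrt 2 * (π*k*Real.cos (π*k*p.2))))
              * (∑ k ∈ Finset.Icc 1 N,
                Complex.ofReal (Real.sqrt 2 * Real.sin (π*k*p.2)) * derivWithin (h k) (Icc a b) p.1))
      + Complex.ofReal ((1 + (derivWithin φ (Icc a b) p.1 * p.2)^2) / φ p.1^2) *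
          ((starRingEnd ℂ) (∑ k ∈ Finset.Icc 1 N, h k p.1 * Complex.ofReal (Real.sqrt 2 * (π*k*Real.cos (π*k*p.2))))
            * (∑ k ∈ Finset.Icc 1 N, h k p.1 * Complex.ofReal (Real.sqrt 2 * (π*k*Real.cos (π*k*p.2)))))
      - Complex.ofReal lam *
          Complex.ofReal (‖∑ k ∈ Finset.Icc 1 N, h k p.1 * Complex.ofReal (Real.sqrt 2 * Real.sin (π*k*p.2))‖^2))
    * Complex.ofReal (φ p.1) with hΦ
  -- pointwise equality on the open rectangle
  have heq : EqOn (fun p : ℝ × ℝ =>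
      ((starRingEnd ℂ) (fderiv ℝ (fun p : ℝ × ℝ => ∑ k ∈ Finset.Icc 1 N,
            h k p.1 * Complex.ofReal (Real.sqrt 2 * Real.sin (π * k * p.2))) p (1, 0))
          * fderiv ℝ (fun p : ℝ × ℝ => ∑ k ∈ Finset.Icc 1 N,
            h k p.1 * Complex.ofReal (Real.sqrt 2 * Real.sin (π * k * p.2))) p (1, 0)
        + Complex.ofReal (-(deriv φ p.1 * p.2 / φ p.1)) *
            ((starRingEnd ℂ) (fderiv ℝ (fun p : ℝ × ℝ => ∑ k ∈ Finset.Icc 1 N,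
                h k p.1 * Complex.ofReal (Real.sqrt 2 * Real.sin (π * k * p.2))) p (1, 0))
                * fderiv ℝ (fun p : ℝ × ℝ => ∑ k ∈ Finset.Icc 1 N,
                h k p.1 * Complex.ofReal (Real.sqrt 2 * Real.sin (π * k * p.2))) p (0, 1)
              + (starRingEnd ℂ) (fderiv ℝ (fun p : ℝ × ℝ => ∑ k ∈ Finset.Icc 1 N,
                h k p.1 * Complex.ofReal (Real.sqrt 2 * Real.sin (π * k * p.2))) p (0, 1))
                * fderiv ℝ (fun p : ℝ × ℝ => ∑ k ∈ Finset.Icc 1 N,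
                h k p.1 * Complex.ofReal (Real.sqrt 2 * Real.sin (π * k * p.2))) p (1, 0))
        + Complex.ofReal ((1 + (deriv φ p.1 * p.2) ^ 2) / φ p.1 ^ 2) *
            ((starRingEnd ℂ) (fderiv ℝ (fun p : ℝ × ℝ => ∑ k ∈ Finset.Icc 1 N,
                h k p.1 * Complex.ofReal (Real.sqrt 2 * Real.sin (π * k * p.2))) p (0, 1))
              * fderiv ℝ (fun p : ℝ × ℝ => ∑ k ∈ Finset.Icc 1 N,
                h k p.1 * Complex.ofReal (Real.sqrt 2 * Real.sin (π * k * p.2))) p (0, 1))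
        - Complex.ofReal lam * Complex.ofReal
            (‖∑ k ∈ Finset.Icc 1 N, h k p.1 * Complex.ofReal (Real.sqrt 2 * Real.sin (π * k * p.2))‖ ^ 2))
      * Complex.ofReal (φ p.1)) Φ (Ioo a b ×ˢ Ioo (0:ℝ) 1) := by
    intro p hp
    have hp1 : p.1 ∈ Ioo a b := hp.1
    -- the total derivative
    have hterm : ∀ k ∈ Finset.Icc 1 N, HasFDerivAt
        (fun q : ℝ × ℝ => h k q.1 * Complex.ofReal (Real.sqrt 2 * Real.sin (π * k * q.2)))
        ((h k p.1) • ((ContinuousLinearMap.smulRight (1 : ℝ →L[ℝ] ℝ)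
              ((Real.sqrt 2 * (π * k * Real.cos (π * k * p.2)) : ℝ) : ℂ)).comp
            (ContinuousLinearMap.snd ℝ ℝ ℝ))
          + (Complex.ofReal (Real.sqrt 2 * Real.sin (π * k * p.2))) •
            ((ContinuousLinearMap.smulRight (1 : ℝ →L[ℝ] ℝ) (deriv (h k) p.1)).comp
              (ContinuousLinearMap.fst ℝ ℝ ℝ))) p := by
      intro k hk
      have h1 : HasDerivAt (fun y : ℝ => π * (k:ℝ) * y) (π * k) p.2 := by
        simpa using (hasDerivAt_id p.2).const_mul (π * (k:ℝ))
      have h2 : HasDerivAt (fun y : ℝ => Real.sqrt 2 * Real.sin (π * k * y))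
          (Real.sqrt 2 * (π * k * Real.cos (π * k * p.2))) p.2 := by
        have := (h1.sin).const_mul (Real.sqrt 2)
        refine this.congr_deriv ?_
        ring
      have h3 : HasFDerivAt (fun q : ℝ × ℝ => (Complex.ofReal (Real.sqrt 2 * Real.sin (π * k * q.2))))
          ((ContinuousLinearMap.smulRight (1 : ℝ →L[ℝ] ℝ)
              ((Real.sqrt 2 * (π * k * Real.cos (π * k * p.2)) : ℝ) : ℂ)).comp
            (ContinuousLinearMap.snd ℝ ℝ ℝ)) p :=
        (hasDerivAt_iff_hasFDerivAt.mp h2.ofReal_comp).comp p hasFDerivAt_snd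
      have h4 : HasFDerivAt (fun q : ℝ × ℝ => h k q.1)
          ((ContinuousLinearMap.smulRight (1 : ℝ →L[ℝ] ℝ) (deriv (h k) p.1)).comp
            (ContinuousLinearMap.fst ℝ ℝ ℝ)) p :=
        (hasDerivAt_iff_hasFDerivAt.mp (hdiff k hk p.1 hp1)).comp p hasFDerivAt_fst
      exact h4.mul h3
    have hfd := (HasFDerivAt.fun_sum hterm).fderiv
    have hv1 : fderiv ℝ (fun p : ℝ × ℝ => ∑ k ∈ Finset.Icc 1 N,
          h k p.1 * Complex.ofReal (Real.sqrt 2 * Real.sin (π * k * p.2))) p (1, 0)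
        = ∑ k ∈ Finset.Icc 1 N,
            Complex.ofReal (Real.sqrt 2 * Real.sin (π*k*p.2)) * deriv (h k) p.1 := by
      rw [hfd]
      simp [ContinuousLinearMap.sum_apply, ContinuousLinearMap.add_apply,
        ContinuousLinearMap.coe_smul', Pi.smul_apply, ContinuousLinearMap.comp_apply,
        ContinuousLinearMap.smulRight_apply, ContinuousLinearMap.one_apply, smul_eq_mul]
    have hv2 : fderiv ℝ (fun p : ℝ × ℝ => ∑ k ∈ Finset.Icc 1 N,
          h k p.1 * Complex.ofReal (Real.sqrt 2 * Real.sin (π * k * p.2))) p (0, 1)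
        = ∑ k ∈ Finset.Icc 1 N,
            h k p.1 * Complex.ofReal (Real.sqrt 2 * (π*k*Real.cos (π*k*p.2))) := by
      rw [hfd]
      simp [ContinuousLinearMap.sum_apply, ContinuousLinearMap.add_apply,
        ContinuousLinearMap.coe_smul', Pi.smul_apply, ContinuousLinearMap.comp_apply,
        ContinuousLinearMap.smulRight_apply, ContinuousLinearMap.one_apply, smul_eq_mul]
    have hdw : ∀ g : ℝ → ℂ, derivWithin g (Icc a b) p.1 = deriv g p.1 :=
      fun g => derivWithin_of_mem_nhds (hmemI p.1 hp1)
    have hdwφ : derivWithin φ (Icc a b) p.1 = deriv φ p.1 :=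
      derivWithin_of_mem_nhds (hmemI p.1 hp1)
    simp only [hΦ, hv1, hv2, hdw, hdwφ]
  rw [MeasureTheory.setIntegral_congr_fun (measurableSet_Ioo.prod measurableSet_Ioo) heq]
  -- integrability of Φ
  have hK : IsCompact (Icc a b ×ˢ Icc (0:ℝ) 1) := isCompact_Icc.prod isCompact_Icc
  have hmem1 : ∀ p : ℝ × ℝ, p ∈ Icc a b ×ˢ Icc (0:ℝ) 1 → p.1 ∈ Icc a b := fun p hp => hp.1
  have hφc : ContinuousOn (fun p : ℝ × ℝ => φ p.1) (Icc a b ×ˢ Icc (0:ℝ) 1) :=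
    hφ.continuousOn.comp continuous_fst.continuousOn hmem1
  have hφne : ∀ p ∈ Icc a b ×ˢ Icc (0:ℝ) 1, φ p.1 ≠ 0 := fun p hp => ne_of_gt (hφpos _ hp.1)
  have hDφc : ContinuousOn (fun p : ℝ × ℝ => derivWithin φ (Icc a b) p.1) (Icc a b ×ˢ Icc (0:ℝ) 1) :=
    (hφ.continuousOn_derivWithin (uniqueDiffOn_Icc hab) le_rfl).comp continuous_fst.continuousOn hmem1
  have hDWc : ∀ k ∈ Finset.Icc 1 N, ContinuousOn (fun p : ℝ × ℝ => derivWithin (h k) (Icc a b) p.1)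
      (Icc a b ×ˢ Icc (0:ℝ) 1) := fun k hk =>
    ((hh k hk).continuousOn_derivWithin (uniqueDiffOn_Icc hab) le_rfl).comp
      continuous_fst.continuousOn hmem1
  have hhc : ∀ k ∈ Finset.Icc 1 N, ContinuousOn (fun p : ℝ × ℝ => h k p.1)
      (Icc a b ×ˢ Icc (0:ℝ) 1) := fun k hk =>
    (hh k hk).continuousOn.comp continuous_fst.continuousOn hmem1
  have hU1c : ContinuousOn (fun p : ℝ × ℝ => ∑ k ∈ Finset.Icc 1 N,
      Complex.ofReal (Real.sqrt 2 * Real.sin (π*k*p.2)) * derivWithin (h k) (Icc a b) p.1)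
      (Icc a b ×ˢ Icc (0:ℝ) 1) := by
    apply continuousOn_finset_sum
    intro k hk
    exact ((Complex.continuous_ofReal.comp (by fun_prop : Continuous fun p : ℝ × ℝ =>
      Real.sqrt 2 * Real.sin (π*k*p.2))).continuousOn).mul (hDWc k hk)
  have hU2c : ContinuousOn (fun p : ℝ × ℝ => ∑ k ∈ Finset.Icc 1 N,
      h k p.1 * Complex.ofReal (Real.sqrt 2 * (π*k*Real.cos (π*k*p.2))))
      (Icc a b ×ˢ Icc (0:ℝ) 1) := by
    apply continuousOn_finset_sum
    intro k hk
    exact (hhc k hk).mul ((Complex.continuous_ofReal.comp (by fun_prop : Continuous fun p : ℝ × ℝ =>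
      Real.sqrt 2 * (π*k*Real.cos (π*k*p.2)))).continuousOn)
  have hFc : ContinuousOn (fun p : ℝ × ℝ => ∑ k ∈ Finset.Icc 1 N,
      h k p.1 * Complex.ofReal (Real.sqrt 2 * Real.sin (π*k*p.2)))
      (Icc a b ×ˢ Icc (0:ℝ) 1) := by
    apply continuousOn_finset_sum
    intro k hk
    exact (hhc k hk).mul ((Complex.continuous_ofReal.comp (by fun_prop : Continuous fun p : ℝ × ℝ =>
      Real.sqrt 2 * Real.sin (π*k*p.2))).continuousOn)
  have hconjU1 := Complex.continuous_conj.comp_continuousOn hU1c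
  have hconjU2 := Complex.continuous_conj.comp_continuousOn hU2c
  have hΦc : ContinuousOn Φ (Icc a b ×ˢ Icc (0:ℝ) 1) := by
    rw [hΦ]
    apply ContinuousOn.mul _ (Complex.continuous_ofReal.comp_continuousOn hφc)
    apply ContinuousOn.sub
    apply ContinuousOn.add
    apply ContinuousOn.add
    · exact hconjU1.mul hU1c
    · apply ContinuousOn.mul
      · apply Complex.continuous_ofReal.comp_continuousOn
        apply ContinuousOn.neg
        exact ((hDφc.mul continuous_snd.continuousOn).div hφc hφne)
      · exact (hconjU1.mul hU2c).add (hconjU2.mul hU1c)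
    · apply ContinuousOn.mul
      · apply Complex.continuous_ofReal.comp_continuousOn
        apply ContinuousOn.div
        · exact (continuousOn_const.add (((hDφc.mul continuous_snd.continuousOn)).pow 2))
        · exact hφc.pow 2
        · intro p hp
          exact pow_ne_zero 2 (hφne p hp)
      · exact hconjU2.mul hU2c
    · exact continuousOn_const.mul
        (Complex.continuous_ofReal.comp_continuousOn ((hFc.norm.pow 2)))
  have hΦint : IntegrableOn Φ (Ioo a b ×ˢ Ioo (0:ℝ) 1) :=
    (hΦc.integrableOn_compact hK).mono_set (prod_mono Ioo_subset_Icc_self Ioo_subset_Icc_self)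
  rw [MeasureTheory.Measure.volume_eq_prod] at hΦint ⊢
  rw [MeasureTheory.setIntegral_prod Φ hΦint]
  -- inner integral via inner_key
  apply MeasureTheory.setIntegral_congr_fun measurableSet_Ioo
  intro x hx
  have hx1 : x ∈ Icc a b := Ioo_subset_Icc_self hx
  have hPne : φ x ≠ 0 := ne_of_gt (hφpos x hx1)
  have key := inner_key N (fun k => h k x) (fun k => derivWithin (h k) (Icc a b) x)
    (φ x) (derivWithin φ (Icc a b) x) lam hPne
  have hdw : ∀ g : ℝ → ℂ, derivWithin g (Icc a b) x = deriv g x :=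
    fun g => derivWithin_of_mem_nhds (hmemI x hx)
  have hdwφ : derivWithin φ (Icc a b) x = deriv φ x :=
    derivWithin_of_mem_nhds (hmemI x hx)
  simp only [hΦ]
  simp only [← hdw, ← hdwφ]
  exact key
end

section
/- Let N ≥ 1 and let M : [a,b] → ℂ^{2N×2N} be continuous. Suppose ψ̃ : [a,b] → ℂ^{N×2N} is continuously differentiable, ψ̃(x) ψ̃(x)* is invertible for every x ∈ [a,b], and ψ̃ satisfies the orthogonal transfer equation ψ̃' + ψ̃ M (I − ψ̃*(ψ̃ ψ̃*)⁻¹ ψ̃) = 0 on [a,b]. Then ψ̃(x) ψ̃(x)* is constant on [a,b]. -/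
open Set Matrix

/-- In Abramov's orthogonal transfer method, a solution ψ̃ of
ψ̃' + ψ̃ M (I − ψ̃*(ψ̃ψ̃*)⁻¹ψ̃) = 0 with ψ̃ψ̃* invertible has ψ̃(x)ψ̃(x)* constant. -/
theorem stmt_14 (N : ℕ) (hN : 1 ≤ N) (a b : ℝ) (hab : a ≤ b)
    (M : ℝ → Matrix (Fin N ⊕ Fin N) (Fin N ⊕ Fin N) ℂ)
    (hM : ∀ i j, ContinuousOn (fun t => M t i j) (Icc a b))
    (ψ : ℝ → Matrix (Fin N) (Fin N ⊕ Fin N) ℂ)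
    (hinv : ∀ x ∈ Icc a b, IsUnit (ψ x * (ψ x)ᴴ))
    (hψ : ∀ x ∈ Icc a b, ∀ i j,
      HasDerivAt (fun t => ψ t i j)
        ((-(ψ x * M x *
            ((1 : Matrix (Fin N ⊕ Fin N) (Fin N ⊕ Fin N) ℂ)
              - (ψ x)ᴴ * (ψ x * (ψ x)ᴴ)⁻¹ * ψ x)) :
            Matrix (Fin N) (Fin N ⊕ Fin N) ℂ) i j) x) :
    ∀ x ∈ Icc a b, ψ x * (ψ x)ᴴ = ψ a * (ψ a)ᴴ := by
  set D : ℝ → Matrix (Fin N) (Fin N ⊕ Fin N) ℂ := fun x =>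
    -(ψ x * M x * ((1 : Matrix (Fin N ⊕ Fin N) (Fin N ⊕ Fin N) ℂ)
        - (ψ x)ᴴ * (ψ x * (ψ x)ᴴ)⁻¹ * ψ x)) with hD
  have hzero : ∀ x ∈ Icc a b, D x * (ψ x)ᴴ = 0 := by
    intro x hx
    have hu := hinv x hx
    have h1 : (ψ x * (ψ x)ᴴ)⁻¹ * (ψ x * (ψ x)ᴴ) = 1 :=
      Matrix.nonsing_inv_mul _ ((Matrix.isUnit_iff_isUnit_det _).mp hu)
    have h2 : ((1 : Matrix (Fin N ⊕ Fin N) (Fin N ⊕ Fin N) ℂ)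
        - (ψ x)ᴴ * (ψ x * (ψ x)ᴴ)⁻¹ * ψ x) * (ψ x)ᴴ = 0 := by
      rw [Matrix.sub_mul, Matrix.one_mul]
      simp only [Matrix.mul_assoc]
      rw [h1, Matrix.mul_one, sub_self]
    rw [hD]
    simp only [Matrix.neg_mul]
    rw [Matrix.mul_assoc, h2, Matrix.mul_zero, neg_zero]
  have hzero' : ∀ x ∈ Icc a b, ψ x * (D x)ᴴ = 0 := by
    intro x hx
    have := congrArg Matrix.conjTranspose (hzero x hx)
    simpa [Matrix.conjTranspose_mul] using this
  intro x hx
  ext i j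
  have key : ∀ y ∈ Icc a b, y ∈ Icc a b →
      HasDerivAt (fun t => (ψ t * (ψ t)ᴴ) i j) 0 y := by
    intro y hy _
    have hd : HasDerivAt (fun t => ∑ k, ψ t i k * star (ψ t j k))
        (∑ k, (D y i k * star (ψ y j k) + ψ y i k * star (D y j k))) y := by
      apply HasDerivAt.fun_sum
      intro k _
      exact (hψ y hy i k).mul ((hψ y hy j k).star)
    have hsum : (∑ k, (D y i k * star (ψ y j k) + ψ y i k * star (D y j k)))
        = (D y * (ψ y)ᴴ + ψ y * (D y)ᴴ) i j := by
      simp [Matrix.add_apply, Matrix.mul_apply, Matrix.conjTranspose_apply,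
        Finset.sum_add_distrib]
    rw [hsum, hzero y hy, hzero' y hy, add_zero] at hd
    have : (fun t => ∑ k, ψ t i k * star (ψ t j k))
        = fun t => (ψ t * (ψ t)ᴴ) i j := by
      funext t
      simp [Matrix.mul_apply, Matrix.conjTranspose_apply]
    rw [this] at hd
    simpa using hd
  have hcont : ContinuousOn (fun t => (ψ t * (ψ t)ᴴ) i j) (Icc a b) := by
    intro y hy
    exact ((key y hy hy).continuousAt).continuousWithinAt
  have := constant_of_has_deriv_right_zero hcont
    (fun y hy => ((key y (Ico_subset_Icc_self hy) (Ico_subset_Icc_self hy)).hasDerivWithinAt))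
  exact this x hx
end
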